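/- Suppose Assumptions 1 and 3 hold and define π(R) = ∫₀^∞ max{0, mz − R} dΦ(z). For λ ∈ (0, λ̄), let R_f(λ) be the unique R ∈ (1, 1/β) satisfying β(R + λπ(R)) = 1 (the fundamental equilibrium interest rate), and for λ > λ̄, let R_b(λ) be the unique R ∈ (1, ∞) satisfying β(R + λπ(R)) = R (the bubbly equilibrium interest rate). Then λ ↦ R_f(λ) is strictly decreasing on (0, λ̄) and λ ↦ R_b(λ) is strictly increasing on (λ̄, ∞). (Proposition 5: the equilibrium interest rate is V-shaped in leverage.) -/

import Mathlib

open Filter Topology MeasureTheory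

/-- **Assumption 1.** `Φ` (the law `μ` of productivity) is an absolutely continuous
cdf on `[0,∞)` with `Φ(z) < 1` for all `z` and a finite mean. -/
structure Assumption1 (μ : Measure ℝ) : Prop where
  prob : IsProbabilityMeasure μ
  supp : μ (Set.Iio 0) = 0
  absCont : μ ≪ MeasureTheory.volume
  lt_one : ∀ z : ℝ, μ (Set.Iic z) < 1
  finite_mean : Integrable id μ

/-- The cdf `Φ` of the productivity distribution `μ`. -/
noncomputable def Phi (μ : Measure ℝ) (z : ℝ) : ℝ := (μ (Set.Iic z)).toReal

/-- The risk premium `π(R) = ∫ max{0, mz − R} dΦ(z)` on unlevered capital investment. -/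
noncomputable def premium (μ : Measure ℝ) (m R : ℝ) : ℝ := ∫ z, max 0 (m * z - R) ∂μ

/-- The leverage threshold `λ̄ = ((1−β)/β)·(∫ max{mz−1, 0} dΦ(z))⁻¹`. -/
noncomputable def lamBar (β m : ℝ) (μ : Measure ℝ) : ℝ :=
  ((1 - β) / β) * (∫ z, max (m * z - 1) 0 ∂μ)⁻¹

/-- **Trend stationary equilibrium** of the two-sector large open economy with linear
technology `F(K,X) = mK + DX`: gross risk-free rate `R > 1`, growth rate `G > 0`,
threshold `z̄ = R/m` with `Φ(z̄) > 1 − 1/λ`, and sequences of aggregate wealth,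
capital, land price, and external savings satisfying the equilibrium conditions,
with `B_t/W_t → 0`. -/
structure TSE (μ : Measure ℝ) (β lam m D : ℝ)
    (R G : ℝ) (W K P B : ℕ → ℝ) : Prop where
  hR : 1 < R
  hG : 0 < G
  hthr : 1 - 1 / lam < Phi μ (R / m)
  hW : ∀ t, 0 < W t
  hP : ∀ t, 0 < P t
  price : ∀ t, R = (P (t + 1) + D) / P t
  growth : G = β * (R + lam * premium μ m R)
  Wdyn : ∀ t, W (t + 1) = G * W t
  Kdyn : ∀ t, K (t + 1) = β * lam * W t * ∫ z in Set.Ioi (R / m), z ∂μ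
  bond : ∀ t, P t + B t = β * (lam * Phi μ (R / m) + 1 - lam) * W t
  wealth : ∀ t, W (t + 1) = m * K (t + 1) + R * (P t + B t)
  hBW : Filter.Tendsto (fun t => B t / W t) Filter.atTop (nhds 0)

lemma pm_int (μ : Measure ℝ) [IsFiniteMeasure μ] (hint : Integrable id μ) (m R : ℝ) :
    Integrable (fun z => max 0 (m * z - R)) μ := by
  have h1 : Integrable (fun z => m * z - R) μ :=
    (hint.const_mul m).sub (integrable_const R)
  simpa [max_comm] using h1.pos_part

lemma pm_mono (μ : Measure ℝ) [IsFiniteMeasure μ] (hint : Integrable id μ) (m : ℝ)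
    {R1 R2 : ℝ} (h : R1 ≤ R2) : premium μ m R2 ≤ premium μ m R1 :=
  integral_mono (pm_int μ hint m R2) (pm_int μ hint m R1)
    (fun z => max_le_max le_rfl (by simp only; linarith))

lemma tail_pos (μ : Measure ℝ) (hμ : Assumption1 μ) (x : ℝ) : 0 < μ (Set.Ioi x) := by
  haveI := hμ.prob
  rcases eq_or_lt_of_le (zero_le : (0 : ENNReal) ≤ μ (Set.Ioi x)) with h | h
  · exfalso
    have h1 : μ Set.univ ≤ μ (Set.Iic x) + μ (Set.Ioi x) := by
      rw [← Set.Iic_union_Ioi (a := x)]; exact measure_union_le _ _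
    rw [measure_univ, ← h, add_zero] at h1
    exact absurd (hμ.lt_one x) (not_lt.mpr h1)
  · exact h

lemma pm_pos (μ : Measure ℝ) (hμ : Assumption1 μ) {m : ℝ} (hm : 0 < m) (R : ℝ) :
    0 < premium μ m R := by
  haveI := hμ.prob
  rw [premium, integral_pos_iff_support_of_nonneg
    (fun z => le_max_left 0 _) (pm_int μ hμ.finite_mean m R)]
  refine lt_of_lt_of_le (tail_pos μ hμ (R / m)) (measure_mono ?_)
  intro z hz
  have hz' : R < m * z := by
    have := (div_lt_iff₀ hm).mp hz
    linarith
  simp only [Function.mem_support]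
  have : max 0 (m * z - R) = m * z - R := max_eq_right (by linarith)
  rw [this]
  linarith

lemma tail_toReal (μ : Measure ℝ) (hμ : Assumption1 μ) (x : ℝ) :
    (μ (Set.Ioi x)).toReal = 1 - Phi μ x := by
  haveI := hμ.prob
  have h1 : μ (Set.Iic x) + μ (Set.Ioi x) = 1 := by
    rw [← Set.compl_Iic, measure_add_measure_compl measurableSet_Iic, measure_univ]
  have h2 := congrArg ENNReal.toReal h1
  rw [ENNReal.toReal_add (measure_ne_top μ _) (measure_ne_top μ _), ENNReal.toReal_one] at h2
  simp only [Phi]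
  linarith

lemma pm_lip (μ : Measure ℝ) (hμ : Assumption1 μ) {m : ℝ} (hm : 0 < m) {R1 R2 : ℝ}
    (h : R1 ≤ R2) :
    premium μ m R1 - premium μ m R2 ≤ (R2 - R1) * (1 - Phi μ (R1 / m)) := by
  haveI := hμ.prob
  have hi1 := pm_int μ hμ.finite_mean m R1
  have hi2 := pm_int μ hμ.finite_mean m R2
  have hind : Integrable (Set.indicator (Set.Ioi (R1 / m)) (fun _ => R2 - R1)) μ :=
    (integrable_const _).indicator measurableSet_Ioi
  have key : ∫ z, (max 0 (m * z - R1) - max 0 (m * z - R2)) ∂μ ≤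
      ∫ z, Set.indicator (Set.Ioi (R1 / m)) (fun _ => R2 - R1) z ∂μ := by
    refine integral_mono (hi1.sub hi2) hind (fun z => ?_)
    simp only
    by_cases hz : z ∈ Set.Ioi (R1 / m)
    · rw [Set.indicator_of_mem hz]
      have hmz : R1 < m * z := by
        have := (div_lt_iff₀ hm).mp hz; linarith
      have e1 : max 0 (m * z - R1) = m * z - R1 := max_eq_right (by linarith)
      have e2 : m * z - R2 ≤ max 0 (m * z - R2) := le_max_right _ _
      linarith
    · rw [Set.indicator_of_notMem hz]
      have hmz : m * z ≤ R1 := by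
        rw [Set.mem_Ioi, not_lt] at hz
        have e : m * (R1 / m) = R1 := by field_simp
        nlinarith [mul_le_mul_of_nonneg_left hz hm.le]
      have e1 : max 0 (m * z - R1) = 0 := max_eq_left (by linarith)
      linarith [le_max_left 0 (m * z - R2)]
  rw [integral_sub hi1 hi2, integral_indicator_const _ measurableSet_Ioi] at key
  rw [smul_eq_mul, measureReal_def, tail_toReal μ hμ] at key
  calc premium μ m R1 - premium μ m R2 ≤ (1 - Phi μ (R1 / m)) * (R2 - R1) := key
    _ = (R2 - R1) * (1 - Phi μ (R1 / m)) := by ring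

lemma pm_conv (μ : Measure ℝ) (hμ : Assumption1 μ) {m : ℝ} (hm : 0 < m) {R : ℝ}
    (h : 1 ≤ R) :
    (R - 1) * (1 - Phi μ (R / m)) ≤ premium μ m 1 - premium μ m R := by
  haveI := hμ.prob
  have hi1 := pm_int μ hμ.finite_mean m 1
  have hiR := pm_int μ hμ.finite_mean m R
  have hind : Integrable (Set.indicator (Set.Ioi (R / m)) (fun _ => R - 1)) μ :=
    (integrable_const _).indicator measurableSet_Ioi
  have key : ∫ z, Set.indicator (Set.Ioi (R / m)) (fun _ => R - 1) z ∂μ ≤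
      ∫ z, (max 0 (m * z - 1) - max 0 (m * z - R)) ∂μ := by
    refine integral_mono hind (hi1.sub hiR) (fun z => ?_)
    simp only
    by_cases hz : z ∈ Set.Ioi (R / m)
    · rw [Set.indicator_of_mem hz]
      have hmz : R < m * z := by
        have := (div_lt_iff₀ hm).mp hz; linarith
      have e1 : max 0 (m * z - 1) = m * z - 1 := max_eq_right (by linarith)
      have e2 : max 0 (m * z - R) = m * z - R := max_eq_right (by linarith)
      rw [e1, e2]; linarith
    · rw [Set.indicator_of_notMem hz]
      have := max_le_max (le_refl (0 : ℝ)) (by linarith : m * z - R ≤ m * z - 1)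
      linarith
  rw [integral_sub hi1 hiR, integral_indicator_const _ measurableSet_Ioi] at key
  rw [smul_eq_mul, measureReal_def, tail_toReal μ hμ] at key
  calc (R - 1) * (1 - Phi μ (R / m)) = (1 - Phi μ (R / m)) * (R - 1) := by ring
    _ ≤ premium μ m 1 - premium μ m R := key

lemma Phi_le_one (μ : Measure ℝ) (hμ : Assumption1 μ) (x : ℝ) : Phi μ x ≤ 1 := by
  have h := (hμ.lt_one x).le
  calc Phi μ x ≤ (1 : ENNReal).toReal := ENNReal.toReal_mono ENNReal.one_ne_top h
    _ = 1 := ENNReal.toReal_one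


/-- **Proposition 5 (the equilibrium interest rate is V-shaped in leverage).**
Under Assumptions 1 and 3, the fundamental equilibrium interest rate `R_f(λ)`
(the unique `R ∈ (1, 1/β)` with `β(R + λπ(R)) = 1`) is strictly decreasing on
`(0, λ̄)`, and the bubbly equilibrium interest rate `R_b(λ)` (the unique `R > 1`
with `β(R + λπ(R)) = R`) is strictly increasing on `(λ̄, ∞)`. -/
theorem interest_rate_V_shaped
    (μ : Measure ℝ) (hμ : Assumption1 μ)
    (β m : ℝ) (hβ : β ∈ Set.Ioo (0 : ℝ) 1) (hm : 0 < m)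
    (hA3 : 1 - Phi μ (1 / m) < β * m * ∫ z in Set.Ioi (1 / m), z ∂μ)
    (Rf Rb : ℝ → ℝ)
    (hRf : ∀ lam ∈ Set.Ioo 0 (lamBar β m μ),
      1 < Rf lam ∧ Rf lam < 1 / β ∧
        β * (Rf lam + lam * premium μ m (Rf lam)) = 1)
    (hRb : ∀ lam ∈ Set.Ioi (lamBar β m μ),
      1 < Rb lam ∧ β * (Rb lam + lam * premium μ m (Rb lam)) = Rb lam) :
    StrictAntiOn Rf (Set.Ioo 0 (lamBar β m μ)) ∧
    StrictMonoOn Rb (Set.Ioi (lamBar β m μ)) := by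
  haveI := hμ.prob
  obtain ⟨hβ0, hβ1⟩ := hβ
  have hint := hμ.finite_mean
  have hIeq : (∫ z, max (m * z - 1) 0 ∂μ) = premium μ m 1 := by
    unfold premium; congr 1; funext z; rw [max_comm]
  have hIpos : 0 < premium μ m 1 := pm_pos μ hμ hm 1
  have hbar_pos : 0 < lamBar β m μ := by
    rw [lamBar, hIeq]
    exact mul_pos (div_pos (by linarith) hβ0) (inv_pos.mpr hIpos)
  constructor
  · -- fundamental branch: strictly decreasing
    intro l1 hl1 l2 hl2 hlt
    obtain ⟨hR1a, hR1b, heq1⟩ := hRf l1 hl1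
    obtain ⟨hR2a, hR2b, heq2⟩ := hRf l2 hl2
    by_contra hcon
    push_neg at hcon
    set R1 := Rf l1 with hR1
    set R2 := Rf l2 with hR2
    set p1 := premium μ m R1 with hp1
    set p2 := premium μ m R2 with hp2
    set d := 1 - Phi μ (R1 / m) with hd
    have hd0 : 0 ≤ d := by
      have := Phi_le_one μ hμ (R1 / m); simp only [hd]; linarith
    have hl1p : 0 < l1 := hl1.1
    have hπm : p2 ≤ p1 := pm_mono μ hint m hcon
    have hπ2 : 0 < p2 := pm_pos μ hμ hm R2
    have hlip : p1 - p2 ≤ (R2 - R1) * d := pm_lip μ hμ hm hcon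
    have hconv : (R1 - 1) * d ≤ premium μ m 1 - p1 := pm_conv μ hμ hm hR1a.le
    -- from l1 < lamBar : β * (l1 * premium 1) < 1 - β
    have hlb : l1 * premium μ m 1 < (1 - β) / β := by
      have h := mul_lt_mul_of_pos_right hl1.2 hIpos
      rw [lamBar, hIeq, mul_assoc, inv_mul_cancel₀ (ne_of_gt hIpos), mul_one] at h
      exact h
    have hbar : β * (l1 * premium μ m 1) < 1 - β := by
      have h := mul_lt_mul_of_pos_left hlb hβ0
      have e : β * ((1 - β) / β) = 1 - β := by field_simp
      linarith [h, e.le]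
    -- derive l1 * d < 1
    have e1 : β * (l1 * (premium μ m 1 - p1)) < β * (R1 - 1) := by nlinarith [heq1, hbar]
    have e2 : l1 * (premium μ m 1 - p1) < R1 - 1 := lt_of_mul_lt_mul_left e1 hβ0.le
    have e3 : l1 * ((R1 - 1) * d) ≤ l1 * (premium μ m 1 - p1) :=
      mul_le_mul_of_nonneg_left hconv hl1p.le
    have hc1 : l1 * d < 1 := by
      by_contra hc
      push_neg at hc
      have h6 := mul_le_mul_of_nonneg_right hc (by linarith : (0:ℝ) ≤ R1 - 1)
      have h7 : l1 * d * (R1 - 1) = l1 * ((R1 - 1) * d) := by ring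
      linarith
    -- final contradiction
    have heq' : R1 + l1 * p1 = R2 + l2 * p2 := by
      have : β * (R1 + l1 * p1) = β * (R2 + l2 * p2) := by rw [heq1, heq2]
      exact mul_left_cancel₀ (ne_of_gt hβ0) this
    have A : l1 * (p1 - p2) ≤ l1 * ((R2 - R1) * d) := mul_le_mul_of_nonneg_left hlip hl1p.le
    have C : l1 * ((R2 - R1) * d) ≤ R2 - R1 := by
      have h6 := mul_le_mul_of_nonneg_right hc1.le (by linarith : (0:ℝ) ≤ R2 - R1)
      have h7 : l1 * d * (R2 - R1) = l1 * ((R2 - R1) * d) := by ring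
      linarith
    have D := mul_lt_mul_of_pos_right hlt hπ2
    have E : l1 * (p1 - p2) = l1 * p1 - l1 * p2 := by ring
    linarith
  · -- bubbly branch: strictly increasing
    intro l1 hl1 l2 hl2 hlt
    obtain ⟨hR1a, heq1⟩ := hRb l1 hl1
    obtain ⟨hR2a, heq2⟩ := hRb l2 hl2
    by_contra hcon
    push_neg at hcon
    set R1 := Rb l1
    set R2 := Rb l2
    set p1 := premium μ m R1
    set p2 := premium μ m R2
    have hl1p : 0 < l1 := lt_trans hbar_pos hl1
    have hπm : p1 ≤ p2 := pm_mono μ hint m hcon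
    have hπ1 : 0 < p1 := pm_pos μ hμ hm R1
    have h5 : l1 * p1 < l2 * p2 := by
      have ha : l1 * p1 < l2 * p1 := mul_lt_mul_of_pos_right hlt hπ1
      have hb : l2 * p1 ≤ l2 * p2 := mul_le_mul_of_nonneg_left hπm (by linarith : (0:ℝ) ≤ l2)
      linarith
    have h6 := mul_lt_mul_of_pos_left h5 hβ0
    have e1 : β * (R1 + l1 * p1) = β * R1 + β * (l1 * p1) := by ring
    have e2 : β * (R2 + l2 * p2) = β * R2 + β * (l2 * p2) := by ring
    have h8 : β * (R1 - R2) ≤ 1 * (R1 - R2) :=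
      mul_le_mul_of_nonneg_right hβ1.le (by linarith : (0:ℝ) ≤ R1 - R2)
    have h9 : β * (R1 - R2) = β * R1 - β * R2 := by ring
    linarith
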